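/- Let a₀, a₀' be non-negative integers and let a₁, …, a_μ and a₁', …, a_ν' be positive integers with μ ≥ 1 and ν ≥ 1. Then the equation a₀ + Σ_{α=1}^{μ} n_α · a_α = a₀' + Σ_{β=1}^{ν} n_β' · a_β' has a solution in non-negative integers (n₁, …, n_μ, n₁', …, n_ν') if and only if gcd(a₁, …, a_μ, a₁', …, a_ν') divides a₀ − a₀'. -/

import Mathlib

/-- Bézout over a finite family of naturals (coefficients in `ℤ`). -/
lemma bezout_finset {ι : Type*} [DecidableEq ι] (s : Finset ι) (f : ι → ℕ) :
    ∃ c : ι → ℤ, ∑ i ∈ s, c i * (f i : ℤ) = ((s.gcd f : ℕ) : ℤ) := by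
  induction s using Finset.induction with
  | empty => exact ⟨0, by simp⟩
  | @insert j s hj ih =>
    obtain ⟨c, hc⟩ := ih
    refine ⟨fun i => if i = j then Nat.gcdA (f j) (s.gcd f)
      else Nat.gcdB (f j) (s.gcd f) * c i, ?_⟩
    rw [Finset.sum_insert hj, Finset.gcd_insert]
    have hrest : ∑ i ∈ s, (if i = j then Nat.gcdA (f j) (s.gcd f)
        else Nat.gcdB (f j) (s.gcd f) * c i) * (f i : ℤ)
        = Nat.gcdB (f j) (s.gcd f) * ∑ i ∈ s, c i * (f i : ℤ) := by
      rw [Finset.mul_sum]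
      refine Finset.sum_congr rfl fun i hi => ?_
      have : i ≠ j := fun h => hj (h ▸ hi)
      simp [this, mul_assoc]
    rw [hrest, hc]
    simp only [eq_self_iff_true, if_true]
    have hg : ((Nat.gcd (f j) (s.gcd f) : ℕ) : ℤ)
        = (f j : ℤ) * Nat.gcdA (f j) (s.gcd f) + ((s.gcd f : ℕ) : ℤ) * Nat.gcdB (f j) (s.gcd f) :=
      Nat.gcd_eq_gcd_ab (f j) (s.gcd f)
    have he : gcd (f j) (s.gcd f) = Nat.gcd (f j) (s.gcd f) := rfl
    rw [he, hg]; ring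

/-- The equation `a₀ + ∑ n α * a α = a₀' + ∑ n' β * b β` has a solution in
non-negative integers iff `gcd(a₁, …, a_μ, a₁', …, a_ν')` divides `a₀ − a₀'`. -/
theorem stmt_4 (a₀ a₀' : ℕ) (μ ν : ℕ) (hμ : 1 ≤ μ) (hν : 1 ≤ ν)
    (a : Fin μ → ℕ) (b : Fin ν → ℕ) (ha : ∀ α, 0 < a α) (hb : ∀ β, 0 < b β) :
    (∃ (n : Fin μ → ℕ) (n' : Fin ν → ℕ),
        a₀ + ∑ α, n α * a α = a₀' + ∑ β, n' β * b β) ↔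
      ((Nat.gcd (Finset.univ.gcd a) (Finset.univ.gcd b) : ℤ) ∣ (a₀ : ℤ) - (a₀' : ℤ)) := by
  set A := Finset.univ.gcd a with hA
  set B := Finset.univ.gcd b with hB
  set d := Nat.gcd A B with hd
  constructor
  · rintro ⟨n, n', h⟩
    have hZ : (a₀ : ℤ) - (a₀' : ℤ)
        = ∑ β, (n' β : ℤ) * (b β : ℤ) - ∑ α, (n α : ℤ) * (a α : ℤ) := by
      have : ((a₀ + ∑ α, n α * a α : ℕ) : ℤ) = ((a₀' + ∑ β, n' β * b β : ℕ) : ℤ) := by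
        exact_mod_cast h
      push_cast at this
      linarith
    rw [hZ]
    refine dvd_sub ?_ ?_
    · refine Finset.dvd_sum fun β _ => Dvd.dvd.mul_left ?_ _
      exact_mod_cast Nat.dvd_trans (Nat.gcd_dvd_right A B) (Finset.gcd_dvd (Finset.mem_univ β))
    · refine Finset.dvd_sum fun α _ => Dvd.dvd.mul_left ?_ _
      exact_mod_cast Nat.dvd_trans (Nat.gcd_dvd_left A B) (Finset.gcd_dvd (Finset.mem_univ α))
  · rintro ⟨k, hk⟩
    obtain ⟨u, hu⟩ := bezout_finset Finset.univ a
    obtain ⟨v, hv⟩ := bezout_finset Finset.univ b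
    set X : ℤ := Nat.gcdA A B
    set Y : ℤ := Nat.gcdB A B
    have hdXY : (d : ℤ) = (A : ℤ) * X + (B : ℤ) * Y := Nat.gcd_eq_gcd_ab A B
    set w : Fin μ → ℤ := fun α => -k * X * u α with hw
    set w' : Fin ν → ℤ := fun β => -k * Y * v β with hw'
    have hsum : ∑ α, w α * (a α : ℤ) + ∑ β, w' β * (b β : ℤ) = (a₀' : ℤ) - a₀ := by
      have h1 : ∑ α, w α * (a α : ℤ) = -k * X * (A : ℤ) := by
        rw [hw, ← hu, Finset.mul_sum]
        exact Finset.sum_congr rfl fun α _ => by ring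
      have h2 : ∑ β, w' β * (b β : ℤ) = -k * Y * (B : ℤ) := by
        rw [hw', ← hv, Finset.mul_sum]
        exact Finset.sum_congr rfl fun β _ => by ring
      rw [h1, h2]
      have : (a₀ : ℤ) - a₀' = ((A : ℤ) * X + (B : ℤ) * Y) * k := by rw [← hdXY]; exact hk
      linarith [this]
    set L : ℕ := (∑ α, (w α).natAbs) + (∑ β, (w' β).natAbs) with hL
    set Pa : ℕ := ∑ α, a α with hPa
    set Pb : ℕ := ∑ β, b β with hPb
    have hPa1 : 1 ≤ Pa := le_trans (ha ⟨0, hμ⟩) (Finset.single_le_sum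
      (fun α _ => Nat.zero_le _) (Finset.mem_univ (⟨0, hμ⟩ : Fin μ)))
    have hPb1 : 1 ≤ Pb := le_trans (hb ⟨0, hν⟩) (Finset.single_le_sum
      (fun β _ => Nat.zero_le _) (Finset.mem_univ (⟨0, hν⟩ : Fin ν)))
    have hLw : ∀ α, ((w α).natAbs : ℤ) ≤ (L : ℤ) := by
      intro α
      have : (w α).natAbs ≤ L := le_trans (Finset.single_le_sum
        (fun α _ => Nat.zero_le ((w α).natAbs)) (Finset.mem_univ α)) (Nat.le_add_right _ _)
      exact_mod_cast this
    have hLw' : ∀ β, ((w' β).natAbs : ℤ) ≤ (L : ℤ) := by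
      intro β
      have : (w' β).natAbs ≤ L := le_trans (Finset.single_le_sum
        (fun β _ => Nat.zero_le ((w' β).natAbs)) (Finset.mem_univ β)) (Nat.le_add_left _ _)
      exact_mod_cast this
    have hn : ∀ α, (0 : ℤ) ≤ w α + (L : ℤ) * (Pb : ℤ) := by
      intro α
      have h1 := hLw α
      have h2 : -((w α).natAbs : ℤ) ≤ w α := by
        rw [← Int.abs_eq_natAbs]; exact neg_abs_le _
      have h3 : (1 : ℤ) ≤ (Pb : ℤ) := by exact_mod_cast hPb1
      nlinarith [Int.natCast_nonneg L]
    have hn' : ∀ β, (0 : ℤ) ≤ (L : ℤ) * (Pa : ℤ) - w' β := by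
      intro β
      have h1 := hLw' β
      have h2 : w' β ≤ ((w' β).natAbs : ℤ) := by
        rw [← Int.abs_eq_natAbs]; exact le_abs_self _
      have h3 : (1 : ℤ) ≤ (Pa : ℤ) := by exact_mod_cast hPa1
      nlinarith [Int.natCast_nonneg L]
    refine ⟨fun α => (w α + (L : ℤ) * Pb).toNat, fun β => ((L : ℤ) * Pa - w' β).toNat, ?_⟩
    have key : (a₀ : ℤ) + ∑ α, (w α + (L : ℤ) * Pb) * a α
        = (a₀' : ℤ) + ∑ β, ((L : ℤ) * Pa - w' β) * b β := by
      have e1 : ∑ α, (w α + (L : ℤ) * Pb) * (a α : ℤ)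
          = ∑ α, w α * a α + (L : ℤ) * Pb * Pa := by
        rw [Finset.sum_congr rfl (fun α _ => add_mul (w α) ((L : ℤ) * Pb) (a α : ℤ)),
          Finset.sum_add_distrib, ← Finset.mul_sum]
        congr 1
        push_cast [hPa]
        ring
      have e2 : ∑ β, ((L : ℤ) * Pa - w' β) * (b β : ℤ)
          = (L : ℤ) * Pa * Pb - ∑ β, w' β * b β := by
        rw [Finset.sum_congr rfl (fun β _ => sub_mul ((L : ℤ) * Pa) (w' β) (b β : ℤ)),
          Finset.sum_sub_distrib, ← Finset.mul_sum]
        congr 1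
        push_cast [hPb]
        ring
      rw [e1, e2]
      linarith [hsum]
    have castn : ∀ α, (((w α + (L : ℤ) * Pb).toNat : ℤ)) = w α + (L : ℤ) * Pb :=
      fun α => Int.toNat_of_nonneg (hn α)
    have castn' : ∀ β, ((((L : ℤ) * Pa - w' β).toNat : ℤ)) = (L : ℤ) * Pa - w' β :=
      fun β => Int.toNat_of_nonneg (hn' β)
    have goalZ : ((a₀ + ∑ α, (w α + (L : ℤ) * Pb).toNat * a α : ℕ) : ℤ)
        = ((a₀' + ∑ β, ((L : ℤ) * Pa - w' β).toNat * b β : ℕ) : ℤ) := by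
      push_cast
      simp only [castn, castn']
      exact key
    exact_mod_cast goalZ
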